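/- Let a, b, Q > 0 and let (Uⱼ)ⱼ≥0 and (Aⱼ)ⱼ≥1 be sequences of nonnegative real numbers satisfying, for all j ≥ 0: U_{j+1} ≤ (1/a)·[Σ_{p=0}^{j} A_{j+1−p}·U_p + Q·U_j] and A_{j+1} ≤ (1/b)·[Σ_{p=1}^{j} A_{j+1−p}·U_p + Q·U_j]. Set v₀ = U₀/b and R = 1/((1 + v₀)·Q·(1 + 2v₀ + 2√(v₀(1 + v₀)))). If a·R > 1, then there exists a constant C > 0 such that for all j ≥ 1: Uⱼ ≤ C·(a·R)^{−j} and Aⱼ ≤ C·(a·R)^{−j}; in particular the series Σⱼ Aⱼ and Σⱼ Uⱼ converge, with Σ_{j>m} Aⱼ ≤ C·(a·R)^{−m}/(a·R − 1) for every m ≥ 0. -/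

import Mathlib

private lemma conv_key (f g : ℕ → ℝ) (hf : ∀ i, 1 ≤ i → 0 ≤ f i) (hg : ∀ p, 0 ≤ g p) (N lo : ℕ) :
    ∑ j ∈ Finset.range (N+1), ∑ p ∈ Finset.Icc lo j, f (j+1-p) * g p
      ≤ (∑ i ∈ Finset.Icc 1 (N+1-lo), f i) * (∑ p ∈ Finset.Icc lo N, g p) := by
  classical
  rw [Finset.sum_mul_sum, ← Finset.sum_product']
  rw [Finset.sum_sigma']
  have hinj : ∀ x ∈ (Finset.range (N+1)).sigma (fun j => Finset.Icc lo j),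
      ∀ y ∈ (Finset.range (N+1)).sigma (fun j => Finset.Icc lo j),
      (fun x : Σ _ : ℕ, ℕ => (x.1 + 1 - x.2, x.2)) x
        = (fun x : Σ _ : ℕ, ℕ => (x.1 + 1 - x.2, x.2)) y → x = y := by
    intro x hx y hy hxy
    simp only [Finset.mem_sigma, Finset.mem_range, Finset.mem_Icc] at hx hy
    simp only [Prod.mk.injEq] at hxy
    have h1 : x.1 = y.1 := by omega
    exact Sigma.ext h1 (heq_of_eq hxy.2)
  have heq : ∑ x ∈ (Finset.range (N+1)).sigma (fun j => Finset.Icc lo j),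
        f (x.1 + 1 - x.2) * g x.2
      = ∑ q ∈ ((Finset.range (N+1)).sigma (fun j => Finset.Icc lo j)).image
          (fun x : Σ _ : ℕ, ℕ => (x.1 + 1 - x.2, x.2)), f q.1 * g q.2 :=
    (Finset.sum_image (f := fun q : ℕ × ℕ => f q.1 * g q.2) hinj).symm
  rw [heq]
  apply Finset.sum_le_sum_of_subset_of_nonneg
  · intro q hq
    simp only [Finset.mem_image, Finset.mem_sigma, Finset.mem_range, Finset.mem_Icc] at hq
    obtain ⟨x, ⟨hx1, hx2, hx3⟩, rfl⟩ := hq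
    simp only [Finset.mem_product, Finset.mem_Icc]
    omega
  · intro q hq _
    simp only [Finset.mem_product, Finset.mem_Icc] at hq
    exact mul_nonneg (hf q.1 hq.1.1) (hg q.2)

private lemma sum_shift' (f : ℕ → ℝ) (n : ℕ) :
    ∑ i ∈ Finset.Icc 1 n, f i = ∑ j ∈ Finset.range n, f (j+1) := by
  rw [← Finset.Ico_add_one_right_eq_Icc, Finset.sum_Ico_eq_sum_range]
  exact Finset.sum_congr rfl fun j _ => by rw [add_comm]

private lemma sum_split0 (f : ℕ → ℝ) (n : ℕ) :
    ∑ p ∈ Finset.range (n+1), f p = f 0 + ∑ p ∈ Finset.Icc 1 n, f p := by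
  rw [sum_shift', Finset.sum_range_succ']
  ring

private lemma Icc_zero_eq_range (n : ℕ) : Finset.Icc 0 n = Finset.range (n+1) := by
  ext x; simp [Nat.lt_succ_iff]

/-- abstract core of the FD-method convergence theorem:
geometric decay of the corrections under the condition `a·R > 1`. -/
theorem stmt_12 (a b Q : ℝ) (ha : 0 < a) (hb : 0 < b) (hQ : 0 < Q)
    (U A : ℕ → ℝ) (hU : ∀ j, 0 ≤ U j) (hA : ∀ j, 1 ≤ j → 0 ≤ A j)
    (hUrec : ∀ j, U (j+1) ≤ (1/a) * ((∑ p ∈ Finset.range (j+1), A (j+1-p) * U p) + Q * U j))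
    (hArec : ∀ j, A (j+1) ≤ (1/b) * ((∑ p ∈ Finset.Icc 1 j, A (j+1-p) * U p) + Q * U j))
    (v0 R : ℝ) (hv0 : v0 = U 0 / b)
    (hR : R = 1 / ((1+v0)*Q*(1 + 2*v0 + 2*Real.sqrt (v0*(1+v0)))))
    (hconv : 1 < a * R) :
    ∃ C > 0, (∀ j, 1 ≤ j → U j ≤ C / (a*R)^j ∧ A j ≤ C / (a*R)^j) ∧
      Summable (fun j => A (j+1)) ∧ Summable U ∧
      ∀ m : ℕ, (∑' j : ℕ, A (j + m + 1)) ≤ C / (a*R)^m / (a*R - 1) := by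
  set z := a * R with hzdef
  have hzpos : (0:ℝ) < z := lt_trans one_pos hconv
  have hz1 : (1:ℝ) < z := hconv
  have hzm1 : (0:ℝ) < z - 1 := by linarith
  rcases eq_or_lt_of_le (hU 0) with hU0 | hU0
  · -- degenerate case: U 0 = 0, everything vanishes
    have hzero : ∀ j, U j = 0 ∧ (1 ≤ j → A j = 0) := by
      intro j
      induction j using Nat.strong_induction_on with
      | _ j ih =>
        match j with
        | 0 => exact ⟨hU0.symm, fun h => absurd h (by omega)⟩
        | (j+1) =>
          have hUz : ∀ p, p ≤ j → U p = 0 := fun p hp => (ih p (by omega)).1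
          have hsum1 : ∑ p ∈ Finset.Icc 1 j, A (j+1-p) * U p = 0 := by
            apply Finset.sum_eq_zero; intro p hp
            rw [hUz p (Finset.mem_Icc.mp hp).2]; ring
          have hsum0 : ∑ p ∈ Finset.range (j+1), A (j+1-p) * U p = 0 := by
            apply Finset.sum_eq_zero; intro p hp
            rw [hUz p (Nat.lt_succ_iff.mp (Finset.mem_range.mp hp))]; ring
          have hA0 : A (j+1) = 0 := by
            have h1 := hArec j
            rw [hsum1, hUz j le_rfl] at h1
            have h2 := hA (j+1) (by omega)
            simp only [mul_zero, add_zero, zero_add] at h1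
            nlinarith
          have hU0' : U (j+1) = 0 := by
            have h1 := hUrec j
            rw [hsum0, hUz j le_rfl] at h1
            have h2 := hU (j+1)
            simp only [mul_zero, add_zero, zero_add] at h1
            nlinarith
          exact ⟨hU0', fun _ => hA0⟩
    refine ⟨1, one_pos, ?_, ?_, ?_, ?_⟩
    · intro j hj
      have hzj : (0:ℝ) < z^j := pow_pos hzpos j
      constructor
      · rw [(hzero j).1]; positivity
      · rw [(hzero j).2 hj]; positivity
    · have he : (fun j => A (j+1)) = fun _ => (0:ℝ) :=
        funext fun j => (hzero (j+1)).2 (by omega)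
      rw [he]; exact summable_zero
    · have he : U = fun _ => (0:ℝ) := funext fun j => (hzero j).1
      rw [he]; exact summable_zero
    · intro m
      have he : (fun j : ℕ => A (j + m + 1)) = fun _ => (0:ℝ) :=
        funext fun j => (hzero (j+m+1)).2 (by omega)
      rw [he, tsum_zero]
      have hzm : (0:ℝ) < z^m := pow_pos hzpos m
      positivity
  · -- main case: 0 < U 0
    set S := Real.sqrt (U 0 * (U 0 + b)) with hSdef
    have hSsq : S^2 = U 0 * (U 0 + b) := Real.sq_sqrt (by positivity)
    have hSpos : 0 < S := Real.sqrt_pos.mpr (by positivity)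
    have hSgt : U 0 < S := by nlinarith
    have hSlt : S < U 0 + b := by nlinarith
    have hden : 0 < b + U 0 - S := by linarith
    -- sqrt simplification
    have hsqrt : Real.sqrt (v0 * (1 + v0)) = S / b := by
      have h1 : v0 * (1 + v0) = (S/b)^2 := by
        rw [hv0, div_pow, hSsq]; field_simp; ring
      rw [h1, Real.sqrt_sq (by positivity)]
    -- exact value of R
    have hRval : R = b^2 / ((b + U 0) * Q * (b + 2*U 0 + 2*S)) := by
      rw [hR, hsqrt, hv0]
      rw [div_eq_div_iff (by positivity) (by positivity)]
      field_simp
    -- polynomial identity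
    have hpoly : (S - U 0) * (b + U 0 - S) * (b + 2*U 0 + 2*S) = S * b^2 := by
      linear_combination (b + 2*U 0 - 2*S) * hSsq
    have hkey' : Q * R * S * (U 0 + b) = (S - U 0) * (b + U 0 - S) := by
      rw [hRval]
      field_simp
      linear_combination (-(b+U 0)) * hpoly
    have hkey : Q * z * S * (U 0 + b) = a * ((S - U 0) * (b + U 0 - S)) := by
      rw [hzdef, ← hkey']; ring
    set T := Q * z * S / (b + U 0 - S) with hTdef
    have hTden : T * (b + U 0 - S) = Q * z * S := by
      rw [hTdef]; field_simp
    have hTpos : 0 < T := div_pos (by positivity) hden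
    have hI1 : T * (S - U 0) + Q * z * S = b * T := by linear_combination - hTden
    have hI2 : T * S + Q * z * S = a * (S - U 0) := by
      have h2 : (T * S + Q*z*S) * (b + U 0 - S) = (a * (S - U 0)) * (b + U 0 - S) := by
        linear_combination S * hTden + hkey
      exact mul_right_cancel₀ (ne_of_gt hden) h2
    -- nonnegativity of weighted terms
    have hUznn : ∀ p, 0 ≤ U p * z^p := fun p => mul_nonneg (hU p) (pow_nonneg hzpos.le p)
    have hAznn : ∀ i, 1 ≤ i → 0 ≤ A i * z^i :=
      fun i hi => mul_nonneg (hA i hi) (pow_nonneg hzpos.le i)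
    -- main induction on partial sums
    have main : ∀ N, (∑ p ∈ Finset.range (N+1), U p * z^p ≤ S) ∧
        (∑ i ∈ Finset.Icc 1 N, A i * z^i ≤ T) := by
      intro N
      induction N with
      | zero =>
        constructor
        · simpa using hSgt.le
        · rw [Finset.Icc_eq_empty (by omega), Finset.sum_empty]; exact hTpos.le
      | succ N ih =>
        obtain ⟨hs, ht⟩ := ih
        have hs' : ∑ p ∈ Finset.Icc 1 N, U p * z^p ≤ S - U 0 := by
          have hsplit := sum_split0 (fun p => U p * z^p) N
          simp only [pow_zero, mul_one] at hsplit
          rw [hsplit] at hs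
          linarith
        have hsums_nn : 0 ≤ ∑ p ∈ Finset.Icc 1 N, U p * z^p :=
          Finset.sum_nonneg fun p _ => hUznn p
        have hsums_nn0 : 0 ≤ ∑ p ∈ Finset.Icc 0 N, U p * z^p :=
          Finset.sum_nonneg fun p _ => hUznn p
        -- step for t
        have ht1 : ∑ i ∈ Finset.Icc 1 (N+1), A i * z^i ≤ T := by
          rw [sum_shift']
          have hterm : ∀ j ∈ Finset.range (N+1), A (j+1) * z^(j+1)
              ≤ (1/b) * ((∑ p ∈ Finset.Icc 1 j, (A (j+1-p) * z^(j+1-p)) * (U p * z^p))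
                + Q*z*(U j * z^j)) := by
            intro j _
            have h2 : A (j+1) * z^(j+1)
                ≤ ((1/b) * ((∑ p ∈ Finset.Icc 1 j, A (j+1-p) * U p) + Q * U j)) * z^(j+1) :=
              mul_le_mul_of_nonneg_right (hArec j) (pow_nonneg hzpos.le _)
            refine h2.trans_eq ?_
            have e3 : (∑ p ∈ Finset.Icc 1 j, A (j+1-p) * U p) * z^(j+1)
                = ∑ p ∈ Finset.Icc 1 j, (A (j+1-p) * z^(j+1-p)) * (U p * z^p) := by
              rw [Finset.sum_mul]
              refine Finset.sum_congr rfl fun p hp => ?_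
              have hp' := Finset.mem_Icc.mp hp
              rw [show z^(j+1) = z^(j+1-p) * z^p by rw [← pow_add]; congr 1; omega]
              ring
            rw [← e3, pow_succ]
            ring
          calc ∑ j ∈ Finset.range (N+1), A (j+1) * z^(j+1)
              ≤ ∑ j ∈ Finset.range (N+1), (1/b) *
                  ((∑ p ∈ Finset.Icc 1 j, (A (j+1-p) * z^(j+1-p)) * (U p * z^p))
                    + Q*z*(U j * z^j)) := Finset.sum_le_sum hterm
            _ = (1/b) * ((∑ j ∈ Finset.range (N+1), ∑ p ∈ Finset.Icc 1 j,
                  (A (j+1-p) * z^(j+1-p)) * (U p * z^p))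
                  + Q*z*(∑ j ∈ Finset.range (N+1), U j * z^j)) := by
                rw [← Finset.mul_sum, Finset.sum_add_distrib, ← Finset.mul_sum]
            _ ≤ (1/b) * (T * (S - U 0) + Q*z*S) := by
                apply mul_le_mul_of_nonneg_left _ (by positivity)
                apply add_le_add
                · refine le_trans (conv_key (fun i => A i * z^i) (fun p => U p * z^p)
                    hAznn hUznn N 1) ?_
                  simp only [Nat.add_sub_cancel]
                  exact mul_le_mul ht hs' hsums_nn hTpos.le
                · exact mul_le_mul_of_nonneg_left hs (by positivity)
            _ = T := by
                rw [hI1]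
                field_simp
        -- step for s
        have hs1 : ∑ p ∈ Finset.range (N+2), U p * z^p ≤ S := by
          have hsplit := sum_split0 (fun p => U p * z^p) (N+1)
          simp only [pow_zero, mul_one] at hsplit
          rw [hsplit, sum_shift']
          have hterm : ∀ j ∈ Finset.range (N+1), U (j+1) * z^(j+1)
              ≤ (1/a) * ((∑ p ∈ Finset.Icc 0 j, (A (j+1-p) * z^(j+1-p)) * (U p * z^p))
                + Q*z*(U j * z^j)) := by
            intro j _
            have h2 : U (j+1) * z^(j+1)
                ≤ ((1/a) * ((∑ p ∈ Finset.range (j+1), A (j+1-p) * U p) + Q * U j)) * z^(j+1) :=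
              mul_le_mul_of_nonneg_right (hUrec j) (pow_nonneg hzpos.le _)
            refine h2.trans_eq ?_
            have e3 : (∑ p ∈ Finset.range (j+1), A (j+1-p) * U p) * z^(j+1)
                = ∑ p ∈ Finset.Icc 0 j, (A (j+1-p) * z^(j+1-p)) * (U p * z^p) := by
              rw [Icc_zero_eq_range, Finset.sum_mul]
              refine Finset.sum_congr rfl fun p hp => ?_
              have hp' := Finset.mem_range.mp hp
              rw [show z^(j+1) = z^(j+1-p) * z^p by rw [← pow_add]; congr 1; omega]
              ring
            rw [← e3, pow_succ]
            ring
          have hchain : ∑ j ∈ Finset.range (N+1), U (j+1) * z^(j+1) ≤ S - U 0 := by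
            calc ∑ j ∈ Finset.range (N+1), U (j+1) * z^(j+1)
                ≤ ∑ j ∈ Finset.range (N+1), (1/a) *
                    ((∑ p ∈ Finset.Icc 0 j, (A (j+1-p) * z^(j+1-p)) * (U p * z^p))
                      + Q*z*(U j * z^j)) := Finset.sum_le_sum hterm
              _ = (1/a) * ((∑ j ∈ Finset.range (N+1), ∑ p ∈ Finset.Icc 0 j,
                    (A (j+1-p) * z^(j+1-p)) * (U p * z^p))
                    + Q*z*(∑ j ∈ Finset.range (N+1), U j * z^j)) := by
                  rw [← Finset.mul_sum, Finset.sum_add_distrib, ← Finset.mul_sum]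
              _ ≤ (1/a) * (T * S + Q*z*S) := by
                  apply mul_le_mul_of_nonneg_left _ (by positivity)
                  apply add_le_add
                  · refine le_trans (conv_key (fun i => A i * z^i) (fun p => U p * z^p)
                      hAznn hUznn N 0) ?_
                    simp only [Nat.sub_zero]
                    have hIcc0 : ∑ p ∈ Finset.Icc 0 N, U p * z^p ≤ S := by
                      rw [Icc_zero_eq_range]; exact hs
                    exact mul_le_mul ht1 hIcc0 hsums_nn0 hTpos.le
                  · exact mul_le_mul_of_nonneg_left hs (by positivity)
              _ = S - U 0 := by
                  rw [hI2]
                  field_simp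
          linarith
        exact ⟨hs1, ht1⟩
    -- extract pointwise bounds
    have hUbound : ∀ j, U j * z^j ≤ S := fun j =>
      le_trans (Finset.single_le_sum (fun p _ => hUznn p) (Finset.self_mem_range_succ j))
        (main j).1
    have hAbound : ∀ j, 1 ≤ j → A j * z^j ≤ T := fun j hj =>
      le_trans (Finset.single_le_sum (fun i hi => hAznn i (Finset.mem_Icc.mp hi).1)
        (Finset.mem_Icc.mpr ⟨hj, le_rfl⟩)) (main j).2
    set C := max S T with hCdef
    have hCpos : 0 < C := lt_of_lt_of_le hSpos (le_max_left S T)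
    have hCU : ∀ j, U j ≤ C / z^j := by
      intro j
      rw [le_div_iff₀ (pow_pos hzpos j)]
      exact le_trans (hUbound j) (le_max_left S T)
    have hCA : ∀ j, 1 ≤ j → A j ≤ C / z^j := by
      intro j hj
      rw [le_div_iff₀ (pow_pos hzpos j)]
      exact le_trans (hAbound j hj) (le_max_right S T)
    -- geometric facts
    have hr0 : (0:ℝ) ≤ 1/z := by positivity
    have hr1 : 1/z < 1 := by rw [div_lt_one hzpos]; exact hz1
    have hgeo : Summable (fun j : ℕ => (1/z)^j) := summable_geometric_of_lt_one hr0 hr1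
    have hCdiv : ∀ n : ℕ, C / z^n = C * (1/z)^n := by
      intro n
      rw [one_div_pow, mul_one_div]
    have hsumgeomshift : ∀ m : ℕ, Summable (fun j : ℕ => C * (1/z)^(j+m)) := by
      intro m
      apply Summable.congr (hgeo.mul_left (C * (1/z)^m))
      intro j
      rw [pow_add]
      ring
    have hsum1 : Summable (fun j : ℕ => A (j+1)) :=
      Summable.of_nonneg_of_le (fun j => hA (j+1) (by omega))
        (fun j => (hCA (j+1) (by omega)).trans_eq (hCdiv (j+1))) (hsumgeomshift 1)
    have hsumU : Summable U := by
      rw [← summable_nat_add_iff 1]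
      exact Summable.of_nonneg_of_le (fun j => hU (j+1))
        (fun j => (hCU (j+1)).trans_eq (hCdiv (j+1))) (hsumgeomshift 1)
    refine ⟨C, hCpos, fun j hj => ⟨hCU j, hCA j hj⟩, hsum1, hsumU, ?_⟩
    intro m
    have hsA : Summable (fun j : ℕ => A (j + m + 1)) := by
      have h := (summable_nat_add_iff (f := fun k => A (k+1)) m).mpr hsum1
      exact h.congr fun j => by norm_num [add_assoc, add_comm, add_left_comm]
    have hsg : Summable (fun j : ℕ => C * (1/z)^(j+m+1)) :=
      (hsumgeomshift (m+1)).congr fun j => by rw [show j+(m+1) = j+m+1 from rfl]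
    have hle : ∀ j : ℕ, A (j+m+1) ≤ C * (1/z)^(j+m+1) :=
      fun j => (hCA (j+m+1) (by omega)).trans_eq (hCdiv _)
    refine (Summable.tsum_le_tsum hle hsA hsg).trans ?_
    have h2 : (∑' j : ℕ, C * (1/z)^(j+m+1)) = (C * (1/z)^(m+1)) * ∑' j : ℕ, (1/z)^j := by
      rw [← tsum_mul_left]
      apply tsum_congr
      intro j
      rw [show j+m+1 = j+(m+1) from rfl, pow_add]
      ring
    rw [h2, tsum_geometric_of_lt_one hr0 hr1]
    apply le_of_eq
    have hzne : z ≠ 0 := ne_of_gt hzpos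
    have hzm1ne : z - 1 ≠ 0 := ne_of_gt hzm1
    rw [one_div_pow]
    field_simp
    ring
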